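/- Let U, V be real inner product spaces (V a Hilbert space), B : U × V → ℝ a bounded bilinear form, and suppose for each trial basis function e ∈ U the 'optimal test function' v_e ∈ V is defined by the Riesz representation problem (r, v_e)_V = B(e, r) for all r ∈ V. Then for any u, u' ∈ U, B(u, v_{u'}) = (v_{u'}, v_u)_V = B(u', v_u); in particular the stiffness matrix G_{ij} = B(e_i, v_{e_j}) arising from optimal test functions is symmetric and positive semidefinite, and it is positive definite if u ↦ v_u is injective. -/

import Mathlib

open RealInnerProductSpace Matrix

/-- optimal test functions yield a symmetric positive (semi)definite
stiffness matrix `G i j = B (e i) (T (e j))`, where `T u = v_u` is the Riesz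
representative of `B u ·`. -/
theorem stmt5 {U V : Type*} [AddCommGroup U] [Module ℝ U]
    [NormedAddCommGroup V] [InnerProductSpace ℝ V] [CompleteSpace V]
    (B : U →ₗ[ℝ] V →L[ℝ] ℝ) (T : U → V)
    (hT : ∀ u : U, ∀ r : V, ⟪T u, r⟫ = B u r)
    {N : ℕ} (e : Fin N → U) (he : LinearIndependent ℝ e)
    (G : Matrix (Fin N) (Fin N) ℝ) (hG : ∀ i j, G i j = B (e i) (T (e j))) :
    (∀ u u' : U, B u (T u') = ⟪T u', T u⟫ ∧ B u (T u') = B u' (T u)) ∧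
    G.IsSymm ∧ G.PosSemidef ∧ (Function.Injective T → G.PosDef) := by
  have key : ∀ u u' : U, B u (T u') = ⟪T u', T u⟫ ∧ B u (T u') = B u' (T u) := by
    intro u u'
    refine ⟨(hT u (T u')).symm.trans (real_inner_comm _ _), ?_⟩
    rw [← hT u (T u'), real_inner_comm, hT u' (T u)]
  have hGinner : ∀ i j, G i j = ⟪T (e i), T (e j)⟫ := fun i j => by
    rw [hG, ← hT]
  have hsymm : G.IsSymm := by
    ext i j
    simp only [Matrix.transpose_apply, hGinner, real_inner_comm]
  have hherm : G.IsHermitian := by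
    simpa [Matrix.IsHermitian] using hsymm.eq
  have quad : ∀ x : Fin N → ℝ, dotProduct (star x) (G *ᵥ x)
      = ⟪∑ i, x i • T (e i), ∑ j, x j • T (e j)⟫ := by
    intro x
    simp only [star_trivial, dotProduct, Matrix.mulVec, dotProduct,
      sum_inner, inner_sum, real_inner_smul_left, real_inner_smul_right, hGinner,
      Finset.mul_sum]
    rw [Finset.sum_comm]
    congr 1; ext i; congr 1; ext j; ring
  have hTlin : ∀ x : Fin N → ℝ, T (∑ i, x i • e i) = ∑ i, x i • T (e i) := by
    intro x
    apply ext_inner_right ℝ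
    intro r
    rw [hT]
    simp [sum_inner, real_inner_smul_left, hT]
  constructor
  · exact key
  refine ⟨hsymm, Matrix.PosSemidef.of_dotProduct_mulVec_nonneg hherm (fun x => ?_), fun hinj => Matrix.PosDef.of_dotProduct_mulVec_pos hherm (fun x hx => ?_)⟩
  · rw [quad]; exact real_inner_self_nonneg
  · rw [quad]
    rw [← hTlin]
    rw [real_inner_self_eq_norm_sq]
    have hpos : ∀ v : V, v ≠ 0 → (0:ℝ) < ‖v‖^2 := fun v hv => pow_pos (norm_pos_iff.mpr hv) 2
    apply hpos
    have hT0 : T 0 = 0 := by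
      apply ext_inner_right ℝ
      intro r
      simp [hT]
    intro hc
    have : (∑ i, x i • e i) = 0 := hinj (by rw [hc, hT0])
    have := Fintype.linearIndependent_iff.mp he x this
    exact hx (funext this)
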